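/- With L_1, L_2, L_3, L_4 the explicit 2×2 matrices and GHZ states |Ψ_{i_1,…,i_n}⟩ = (1/√2)(|i_1⋯i_n⟩ + |ī_1⋯ī_n⟩) in (ℂ²)^{⊗n} (n ≥ 2), for L̃_k = I^{⊗(l-1)} ⊗ L_k ⊗ I^{⊗(n-l)}, one has ⟨L̃_k Ψ_{i_1,…,i_n}, L̃_{k'} Ψ_{i_1,…,i_n}⟩ = (1/4)δ_{kk'}. -/

import Mathlib

open Complex Matrix BigOperators

noncomputable def L : Fin 4 → Matrix (Fin 2) (Fin 2) ℂ :=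
  ![ (1/4 : ℂ) • !![2, 1 - I; 1 + I, 0],
     (1/4 : ℂ) • !![2, -1 + I; -1 - I, 0],
     (1/4 : ℂ) • !![0, 1 + I; 1 - I, 2],
     (1/4 : ℂ) • !![0, -1 - I; -1 + I, 2] ]

/-- Hermitian inner product, conjugate-linear in the first argument. -/
noncomputable def inn {ι : Type*} [Fintype ι] (x y : ι → ℂ) : ℂ :=
  ∑ i, starRingEnd ℂ (x i) * y i

/-- The GHZ state |Ψ_{i_1,…,i_n}⟩ = (1/√2)(|i_1⋯i_n⟩ + |ī_1⋯ī_n⟩)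
in coordinates on (ℂ²)^{⊗n}, where ī = i + 1 (mod 2). -/
noncomputable def GHZ {n : ℕ} (i : Fin n → Fin 2) : (Fin n → Fin 2) → ℂ :=
  fun f => (Real.sqrt 2 : ℂ)⁻¹ *
    ((if f = i then 1 else 0) + (if f = (fun u => i u + 1) then 1 else 0))

/-- L̃ = I^{⊗(l-1)} ⊗ M ⊗ I^{⊗(n-l)} acting on a vector of (ℂ²)^{⊗n}. -/
noncomputable def Ltil {n : ℕ} (l : Fin n) (M : Matrix (Fin 2) (Fin 2) ℂ)
    (x : (Fin n → Fin 2) → ℂ) : (Fin n → Fin 2) → ℂ :=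
  fun f => ∑ m, M (f l) m * x (Function.update f l m)

lemma update_splitAt {n : ℕ} (l : Fin n) (a m : Fin 2) (g : {j // j ≠ l} → Fin 2) :
    Function.update ((Equiv.funSplitAt l (Fin 2)).symm (a, g)) l m
      = (Equiv.funSplitAt l (Fin 2)).symm (m, g) := by
  ext j
  by_cases h : j = l
  · subst h; simp [Equiv.funSplitAt, Equiv.piSplitAt]
  · simp [Function.update, h, Equiv.funSplitAt, Equiv.piSplitAt]

lemma splitAt_apply_self {n : ℕ} (l : Fin n) (a : Fin 2) (g : {j // j ≠ l} → Fin 2) :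
    (Equiv.funSplitAt l (Fin 2)).symm (a, g) l = a := by
  simp [Equiv.funSplitAt, Equiv.piSplitAt]

lemma splitAt_eq_iff {n : ℕ} (l : Fin n) (a : Fin 2) (g : {j // j ≠ l} → Fin 2)
    (i : Fin n → Fin 2) :
    (Equiv.funSplitAt l (Fin 2)).symm (a, g) = i
      ↔ a = i l ∧ g = fun j : {j // j ≠ l} => i j.1 := by
  rw [Equiv.symm_apply_eq, Equiv.funSplitAt_apply, Prod.ext_iff]

lemma sum_two_delta {α : Type*} [Fintype α] [DecidableEq α] (p q : α) (hpq : p ≠ q)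
    (x1 x2 y1 y2 : ℂ) :
    ∑ g, ((if g = p then x1 else 0) + (if g = q then x2 else 0)) *
         ((if g = p then y1 else 0) + (if g = q then y2 else 0))
      = x1 * y1 + x2 * y2 := by
  simp [add_mul, mul_add, ite_mul, mul_ite, Finset.sum_add_distrib, Finset.sum_ite_eq',
    hpq, hpq.symm]

lemma fin2_cases (b : Fin 2) : b = 0 ∨ b = 1 := by fin_cases b <;> simp

lemma fin_two_sum (f : Fin 2 → ℂ) (b : Fin 2) : f b + f (b + 1) = ∑ x, f x := by
  fin_cases b <;> simp [Fin.sum_univ_two] <;> ring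

lemma GHZ_Ltil_inner_key {n : ℕ} (hn : 2 ≤ n) (l : Fin n) (i : Fin n → Fin 2)
    (M N : Matrix (Fin 2) (Fin 2) ℂ) :
    inn (Ltil l M (GHZ i)) (Ltil l N (GHZ i))
      = (1/2 : ℂ) * ∑ a, ∑ b, starRingEnd ℂ (M a b) * N a b := by
  classical
  obtain ⟨j0, hj0⟩ : ∃ j : Fin n, j ≠ l :=
    @exists_ne _ (Fin.nontrivial_iff_two_le.mpr hn) l
  have hgi : (fun j : {j // j ≠ l} => i j.1) ≠ fun j : {j // j ≠ l} => i j.1 + 1 := by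
    intro h
    have h1 := congrFun h ⟨j0, hj0⟩
    have h2 : ∀ a : Fin 2, a ≠ a + 1 := by decide
    exact h2 _ h1
  set c : ℂ := ((Real.sqrt 2 : ℝ) : ℂ)⁻¹ with hc
  have hcc : starRingEnd ℂ c * c = (1/2 : ℂ) := by
    rw [hc, ← Complex.ofReal_inv, Complex.conj_ofReal, ← Complex.ofReal_mul, ← mul_inv,
      Real.mul_self_sqrt (by norm_num)]
    norm_num
  have hform : ∀ (P : Matrix (Fin 2) (Fin 2) ℂ) (a : Fin 2) (g : {j // j ≠ l} → Fin 2),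
      Ltil l P (GHZ i) ((Equiv.funSplitAt l (Fin 2)).symm (a, g))
        = c * ((if g = fun j : {j // j ≠ l} => i j.1 then P a (i l) else 0)
             + (if g = fun j : {j // j ≠ l} => i j.1 + 1 then P a (i l + 1) else 0)) := by
    intro P a g
    have h1 : ∀ m : Fin 2, ((Equiv.funSplitAt l (Fin 2)).symm (m, g) = i)
        ↔ (m = i l ∧ g = fun j : {j // j ≠ l} => i j.1) := fun m => splitAt_eq_iff l m g i
    have h2 : ∀ m : Fin 2, ((Equiv.funSplitAt l (Fin 2)).symm (m, g) = fun u => i u + 1)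
        ↔ (m = i l + 1 ∧ g = fun j : {j // j ≠ l} => i j.1 + 1) := fun m =>
      splitAt_eq_iff l m g _
    simp only [Ltil, splitAt_apply_self, update_splitAt, GHZ, h1, h2]
    have e11 : (1 + 1 : Fin 2) = 0 := rfl
    by_cases hX : g = fun j : {j // j ≠ l} => i j.1
    · have hY : ¬ g = fun j : {j // j ≠ l} => i j.1 + 1 := by rw [hX]; exact hgi
      rcases fin2_cases (i l) with h | h <;>
        simp [hX, hY, h, hgi, e11, mul_ite, mul_add, Fin.sum_univ_two, mul_comm, hc]
    · by_cases hY : g = fun j : {j // j ≠ l} => i j.1 + 1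
      · rcases fin2_cases (i l) with h | h <;>
          simp [hX, hY, h, Ne.symm hgi, e11, mul_ite, mul_add, Fin.sum_univ_two, mul_comm, hc]
      · simp [hX, hY]
  rw [inn, ← Equiv.sum_comp (Equiv.funSplitAt l (Fin 2)).symm, Fintype.sum_prod_type]
  have hsum : ∀ a : Fin 2,
      ∑ g : {j // j ≠ l} → Fin 2,
        starRingEnd ℂ (Ltil l M (GHZ i) ((Equiv.funSplitAt l (Fin 2)).symm (a, g))) *
          Ltil l N (GHZ i) ((Equiv.funSplitAt l (Fin 2)).symm (a, g))
      = (1/2 : ℂ) * (starRingEnd ℂ (M a (i l)) * N a (i l)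
          + starRingEnd ℂ (M a (i l + 1)) * N a (i l + 1)) := by
    intro a
    simp only [hform, _root_.map_mul, map_add, apply_ite (starRingEnd ℂ), map_zero]
    have : ∀ g : {j // j ≠ l} → Fin 2,
        (starRingEnd ℂ c *
          ((if g = fun j : {j // j ≠ l} => i j.1 then starRingEnd ℂ (M a (i l)) else 0)
           + (if g = fun j : {j // j ≠ l} => i j.1 + 1 then starRingEnd ℂ (M a (i l + 1)) else 0))) *
        (c * ((if g = fun j : {j // j ≠ l} => i j.1 then N a (i l) else 0)
           + (if g = fun j : {j // j ≠ l} => i j.1 + 1 then N a (i l + 1) else 0)))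
        = (starRingEnd ℂ c * c) *
          (((if g = fun j : {j // j ≠ l} => i j.1 then starRingEnd ℂ (M a (i l)) else 0)
           + (if g = fun j : {j // j ≠ l} => i j.1 + 1 then starRingEnd ℂ (M a (i l + 1)) else 0)) *
          ((if g = fun j : {j // j ≠ l} => i j.1 then N a (i l) else 0)
           + (if g = fun j : {j // j ≠ l} => i j.1 + 1 then N a (i l + 1) else 0))) := by
      intro g; ring
    rw [Finset.sum_congr rfl fun g _ => this g, ← Finset.mul_sum,
      sum_two_delta _ _ hgi, hcc]
  rw [Finset.sum_congr rfl fun a _ => hsum a, ← Finset.mul_sum]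
  congr 1
  exact Finset.sum_congr rfl fun a _ =>
    fin_two_sum (fun b => starRingEnd ℂ (M a b) * N a b) (i l)

set_option maxHeartbeats 1000000 in
theorem GHZ_Ltil_inner (n : ℕ) (hn : 2 ≤ n) (l : Fin n)
    (i : Fin n → Fin 2) (k k' : Fin 4) :
    inn (Ltil l (L k) (GHZ i)) (Ltil l (L k') (GHZ i))
      = if k = k' then (1/4 : ℂ) else 0 := by
  rw [GHZ_Ltil_inner_key hn l i (L k) (L k')]
  fin_cases k <;> fin_cases k' <;>
    simp [L, Fin.sum_univ_two, Matrix.smul_apply, smul_eq_mul, map_sub, map_add,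
      _root_.map_one, _root_.map_mul, map_neg, map_ofNat, Complex.conj_I] <;>
    ring_nf <;> norm_num [Complex.I_sq]
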